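/- Let D be a chord diagram containing a weak RII pair α = {i, j}, β = {i+1, j+1} (where i, i+1, j, j+1 are distinct points in this cyclic order), and let D' be obtained from D by deleting α and β. Then no triple of chords counted by H(D) contains both α and β, and H(D) ≡ H(D') (mod 2). (This is the paper's claim that one weak RII move changes the H-chord count by an even number.) -/

import Mathlib

/-- A chord diagram on `2 * n` points: a fixed-point-free involution of `ZMod (2 * n)`.
Its two-element orbits are called chords; the points lie on a circle in their
natural cyclic order. -/
structure ChordDiagram (n : ℕ) where
  inv : ZMod (2 * n) → ZMod (2 * n)
  involutive : Function.Involutive inv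
  fixedPointFree : ∀ x, inv x ≠ x

/-- A chord: an unordered pair of points of the circle `ZMod m`. -/
abbrev Chord (m : ℕ) := Sym2 (ZMod m)

/-- `x` lies in the open cyclic arc running counterclockwise from `a` to `b`. -/
def InArc {m : ℕ} (a b x : ZMod m) : Prop :=
  0 < (x - a).val ∧ (x - a).val < (b - a).val

/-- Two chords cross: exactly one endpoint of the second lies in the open cyclic arc
bounded by the first. -/
def Chord.Crosses {m : ℕ} (e f : Chord m) : Prop :=
  ∃ a b c d : ZMod m, e = s(a, b) ∧ f = s(c, d) ∧ Xor' (InArc a b c) (InArc a b d)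

/-- The set of chords of a chord diagram. -/
def ChordDiagram.chords {n : ℕ} (D : ChordDiagram n) : Set (Chord (2 * n)) :=
  {e | ∃ x, e = s(x, D.inv x)}

/-- `P` is an (unordered) pair of crossing chords of `D`. -/
def ChordDiagram.IsCrossingPair {n : ℕ} (D : ChordDiagram n)
    (P : Finset (Chord (2 * n))) : Prop :=
  P.card = 2 ∧ (∀ e ∈ P, e ∈ D.chords) ∧
    ∀ e ∈ P, ∀ f ∈ P, e ≠ f → Chord.Crosses e f

/-- `P` is an (unordered) triple of pairwise crossing chords of `D`. -/
def ChordDiagram.IsTripleChord {n : ℕ} (D : ChordDiagram n)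
    (P : Finset (Chord (2 * n))) : Prop :=
  P.card = 3 ∧ (∀ e ∈ P, e ∈ D.chords) ∧
    ∀ e ∈ P, ∀ f ∈ P, e ≠ f → Chord.Crosses e f

/-- `P` is an H-triple of `D`: a triple `{a, b, c}` of chords of `D` such that `c`
crosses both `a` and `b` while `a` and `b` do not cross. -/
def ChordDiagram.IsHTriple {n : ℕ} (D : ChordDiagram n)
    (P : Finset (Chord (2 * n))) : Prop :=
  P.card = 3 ∧ (∀ e ∈ P, e ∈ D.chords) ∧
    ∃ c ∈ P, (∀ e ∈ P, e ≠ c → Chord.Crosses c e) ∧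
      ∀ a ∈ P, ∀ b ∈ P, a ≠ c → b ≠ c → a ≠ b → ¬ Chord.Crosses a b

/-- `X D`: the number of unordered pairs of chords of `D` that cross. -/
noncomputable def ChordDiagram.X {n : ℕ} (D : ChordDiagram n) : ℕ :=
  Set.ncard {P | D.IsCrossingPair P}

/-- `T D`: the number of unordered triples of chords of `D` that pairwise cross. -/
noncomputable def ChordDiagram.T {n : ℕ} (D : ChordDiagram n) : ℕ :=
  Set.ncard {P | D.IsTripleChord P}

/-- `H D`: the number of H-triples of `D`. -/
noncomputable def ChordDiagram.H {n : ℕ} (D : ChordDiagram n) : ℕ :=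
  Set.ncard {P | D.IsHTriple P}

/-- `D'` is obtained from `D` by deleting the set `S` of chords: deletion removes the
chords of `S` together with their endpoints and reindexes the remaining points
preserving their cyclic order; in particular it induces a bijection between the
remaining chords of `D` and the chords of `D'` preserving all crossing relations. -/
def ChordDiagram.DeletionOf {n n' : ℕ} (D : ChordDiagram n) (S : Set (Chord (2 * n)))
    (D' : ChordDiagram n') : Prop :=
  ∃ φ : {e : Chord (2 * n) // e ∈ D.chords ∧ e ∉ S} ≃
      {e : Chord (2 * n') // e ∈ D'.chords},
    ∀ e f, Chord.Crosses e.1 f.1 ↔ Chord.Crosses (φ e).1 (φ f).1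

/-- Four points occurring in this (strict counterclockwise) cyclic order;
in particular they are pairwise distinct. -/
def CyclicOrd4 {m : ℕ} (a b c d : ZMod m) : Prop :=
  0 < (b - a).val ∧ (b - a).val < (c - a).val ∧ (c - a).val < (d - a).val

/-- Six points occurring in this (strict counterclockwise) cyclic order;
in particular they are pairwise distinct. -/
def CyclicOrd6 {m : ℕ} (a b c d e f : ZMod m) : Prop :=
  0 < (b - a).val ∧ (b - a).val < (c - a).val ∧ (c - a).val < (d - a).val ∧
    (d - a).val < (e - a).val ∧ (e - a).val < (f - a).val

/-- `D` is evenly interlaced: every chord of `D` crosses an even number of chords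
of `D` (true for the Gauss diagram of every knot projection). -/
def ChordDiagram.EvenlyInterlaced {n : ℕ} (D : ChordDiagram n) : Prop :=
  ∀ e ∈ D.chords, Even (Set.ncard {f | f ∈ D.chords ∧ Chord.Crosses e f})

/-- Exactly two of the three propositions hold. -/
def ExactlyTwo (A B C : Prop) : Prop :=
  (A ∧ B ∧ ¬ C) ∨ (A ∧ ¬ B ∧ C) ∨ (¬ A ∧ B ∧ C)

/-- A strong RIII move: the three pairwise crossing chords `{p, q+1}`, `{q, r+1}`,
`{r, p+1}` (where `p, p+1, q, q+1, r, r+1` occur in this cyclic order) are replaced by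
the three chords `{p+1, q}`, `{q+1, r}`, `{r+1, p}`, all other chords being unchanged. -/
def ChordDiagram.StrongRIII {n : ℕ} (D D' : ChordDiagram n) : Prop :=
  ∃ p q r : ZMod (2 * n), CyclicOrd6 p (p + 1) q (q + 1) r (r + 1) ∧
    s(p, q + 1) ∈ D.chords ∧ s(q, r + 1) ∈ D.chords ∧ s(r, p + 1) ∈ D.chords ∧
    D'.chords = (D.chords \ {s(p, q + 1), s(q, r + 1), s(r, p + 1)}) ∪
      {s(p + 1, q), s(q + 1, r), s(r + 1, p)}

section ArcLemmas
variable {m : ℕ} [NeZero m]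

lemma val_sub' (u v : ZMod m) :
    (u - v).val = if v.val ≤ u.val then u.val - v.val else u.val + m - v.val := by
  have hu := ZMod.val_lt u
  have hv := ZMod.val_lt v
  rw [sub_eq_add_neg, ZMod.val_add, ZMod.neg_val]
  by_cases hv0 : v = 0
  · simp [hv0, Nat.mod_eq_of_lt hu]
  · rw [if_neg hv0]
    have hvpos : 0 < v.val := by
      rcases Nat.eq_zero_or_pos v.val with h | h
      · exact absurd ((ZMod.val_eq_zero v).1 h) hv0
      · exact h
    by_cases h : v.val ≤ u.val
    · rw [if_pos h]
      have h2 : u.val + (m - v.val) = (u.val - v.val) + m := by omega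
      rw [h2, Nat.add_mod_right, Nat.mod_eq_of_lt (by omega)]
    · rw [if_neg h, Nat.mod_eq_of_lt (by omega)]
      omega

set_option linter.unusedSectionVars false in
lemma val_sub_ne_zero {u v : ZMod m} (h : u ≠ v) : (u - v).val ≠ 0 := by
  intro h0
  exact h (by have h1 := (ZMod.val_eq_zero (u - v)).1 h0; rwa [sub_eq_zero] at h1)

lemma val_sub_ne {x a b : ZMod m} (h : x ≠ b) : (x - a).val ≠ (b - a).val := by
  intro he
  exact h (sub_left_inj.mp (ZMod.val_injective m he))

/-- Reversal: for three distinct points, x is in arc(a,b) iff not in arc(b,a). -/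
lemma inArc_rev {a b x : ZMod m} (hab : a ≠ b) (hxa : x ≠ a) (hxb : x ≠ b) :
    InArc a b x ↔ ¬ InArc b a x := by
  have hm : 0 < m := Nat.pos_of_ne_zero (NeZero.ne m)
  have htm : (x - a).val < m := ZMod.val_lt _
  have hkm : (b - a).val < m := ZMod.val_lt _
  have ht0 : (x - a).val ≠ 0 := val_sub_ne_zero hxa
  have hk0 : (b - a).val ≠ 0 := val_sub_ne_zero (Ne.symm hab)
  have htk : (x - a).val ≠ (b - a).val := val_sub_ne hxb
  have hab' : (a - b).val = m - (b - a).val := by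
    have h : a - b = -(b - a) := by ring
    rw [h, ZMod.neg_val, if_neg (sub_ne_zero.mpr (Ne.symm hab))]
  have hxb' : (x - b).val = ((x - a) - (b - a)).val := by ring_nf
  unfold InArc
  rw [hab', hxb', val_sub' (x - a) (b - a)]
  split <;> omega

/-- Arc shift: moving both arc endpoints by one step. -/
lemma inArc_shift {i j x : ZMod m} (h1 : ((i + 1) - i).val = 1)
    (hK : 1 < (j - i).val) (hK2 : ((j + 1) - i).val = (j - i).val + 1)
    (hxi : x ≠ i) (hxi1 : x ≠ i + 1) (hxj : x ≠ j) :
    InArc i j x ↔ InArc (i + 1) (j + 1) x := by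
  have hm : 0 < m := Nat.pos_of_ne_zero (NeZero.ne m)
  have htm : (x - i).val < m := ZMod.val_lt _
  have ht0 : (x - i).val ≠ 0 := val_sub_ne_zero hxi
  have ht1 : (x - i).val ≠ 1 := by
    have h := val_sub_ne (a := i) hxi1; rwa [h1] at h
  have htK : (x - i).val ≠ (j - i).val := val_sub_ne hxj
  have hb : ((j + 1) - (i + 1)).val = (j - i).val := by norm_num
  have ha : (x - (i + 1)).val = (x - i).val - 1 := by
    have e : (x - (i + 1)).val = ((x - i) - ((i + 1) - i)).val := by ring_nf
    rw [e, val_sub', h1, if_pos (by omega)]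
  unfold InArc
  rw [hb, ha]
  omega

/-- Point shift: moving the tested point by one step, inside a fixed arc. -/
lemma inArc_pt_shift {c d i : ZMod m} (hic : i ≠ c) (hid : i ≠ d)
    (hi1c : i + 1 ≠ c) (hi1d : i + 1 ≠ d) :
    InArc c d i ↔ InArc c d (i + 1) := by
  have hm : 0 < m := Nat.pos_of_ne_zero (NeZero.ne m)
  have hsm : (i - c).val < m := ZMod.val_lt _
  have hs0 : (i - c).val ≠ 0 := val_sub_ne_zero hic
  have hsk : (i - c).val ≠ (d - c).val := val_sub_ne hid
  have hm2 : 2 ≤ m := by omega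
  have hv1 : (1 : ZMod m).val = 1 := by
    rw [ZMod.val_one_eq_one_mod]; exact Nat.mod_eq_of_lt (by omega)
  have hs1v : ((i + 1) - c).val = ((i - c).val + 1) % m := by
    have e : ((i + 1) - c).val = ((i - c) + 1).val := by ring_nf
    rw [e, ZMod.val_add, hv1]
  have hne : (i - c).val ≠ m - 1 := by
    intro h
    apply hi1c
    have h0 : ((i + 1) - c).val = 0 := by
      rw [hs1v, h, show m - 1 + 1 = m by omega, Nat.mod_self]
    have h1 := (ZMod.val_eq_zero _).1 h0
    rwa [sub_eq_zero] at h1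
  have hs1 : ((i + 1) - c).val = (i - c).val + 1 := by
    rw [hs1v, Nat.mod_eq_of_lt (by omega)]
  have hs1k : ((i + 1) - c).val ≠ (d - c).val := val_sub_ne hi1d
  unfold InArc
  rw [hs1]
  rw [hs1] at hs1k
  omega

lemma crosses_norm {a b c d : ZMod m} (hab : a ≠ b) (hca : c ≠ a) (hcb : c ≠ b)
    (hda : d ≠ a) (hdb : d ≠ b) :
    Chord.Crosses s(a, b) s(c, d) ↔ Xor' (InArc a b c) (InArc a b d) := by
  constructor
  · rintro ⟨a', b', c', d', he, hf, hx⟩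
    rcases Sym2.eq_iff.1 he with ⟨rfl, rfl⟩ | ⟨rfl, rfl⟩ <;>
      rcases Sym2.eq_iff.1 hf with ⟨rfl, rfl⟩ | ⟨rfl, rfl⟩
    · exact hx
    · exact (xor_comm _ _).mp hx
    · rw [inArc_rev hab.symm hcb hca, inArc_rev hab.symm hdb hda] at hx
      unfold Xor' Xor at hx ⊢; tauto
    · rw [inArc_rev hab.symm hdb hda, inArc_rev hab.symm hcb hca] at hx
      unfold Xor' Xor at hx ⊢; tauto
  · intro hx
    exact ⟨a, b, c, d, rfl, rfl, hx⟩

end ArcLemmas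

section ChordLemmas
variable {n : ℕ} {D : ChordDiagram n}

lemma chords_inv {a b : ZMod (2 * n)} (h : s(a, b) ∈ D.chords) : D.inv a = b := by
  obtain ⟨x, hx⟩ := h
  rcases Sym2.eq_iff.1 hx with ⟨ha, hb⟩ | ⟨ha, hb⟩
  · rw [ha, hb]
  · rw [ha, hb]; exact D.involutive x

lemma chords_endpoint_ne {a b c d : ZMod (2 * n)} (h1 : s(a, b) ∈ D.chords)
    (h2 : s(c, d) ∈ D.chords) (hne : s(a, b) ≠ s(c, d)) :
    a ≠ c ∧ a ≠ d ∧ b ≠ c ∧ b ≠ d := by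
  have e1 := chords_inv h1
  have e2 := chords_inv h2
  have e1' : D.inv b = a := by rw [← e1, D.involutive a]
  have e2' : D.inv d = c := by rw [← e2, D.involutive c]
  refine ⟨?_, ?_, ?_, ?_⟩ <;> rintro rfl
  · exact hne (by rw [← e1, e2])
  · exact hne (by rw [← e2', e1, Sym2.eq_swap])
  · exact hne (by rw [← e1', e2, Sym2.eq_swap])
  · exact hne (by rw [← e1', ← e2'])

lemma chord_ne {a b : ZMod (2 * n)} (h : s(a, b) ∈ D.chords) : a ≠ b := by
  have e1 := chords_inv h
  intro hab
  exact D.fixedPointFree a (by rw [e1, hab])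

/-- If no H-triple can contain both α and β (which cross and behave identically
towards all other chords), then swapping α for β preserves being an H-triple. -/
lemma htriple_swap {α β : Chord (2 * n)}
    (hβc : β ∈ D.chords)
    (htrans : ∀ γ ∈ D.chords, γ ≠ α → γ ≠ β →
      ((Chord.Crosses α γ ↔ Chord.Crosses β γ) ∧
        (Chord.Crosses γ α ↔ Chord.Crosses γ β)))
    {P : Finset (Chord (2 * n))} (hP : D.IsHTriple P) (hmem : α ∈ P) (hno : β ∉ P) :
    D.IsHTriple (insert β (P.erase α)) := by
  obtain ⟨hcard, hch, c, hc, hcr, hnc⟩ := hP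
  have hβ' : β ∉ P.erase α := fun h => hno (Finset.mem_of_mem_erase h)
  refine ⟨?_, ?_, ?_⟩
  · rw [Finset.card_insert_of_notMem hβ', Finset.card_erase_of_mem hmem, hcard]
  · intro e he
    rcases Finset.mem_insert.1 he with rfl | he'
    · exact hβc
    · exact hch e (Finset.mem_of_mem_erase he')
  · by_cases hcα : c = α
    · subst hcα
      refine ⟨β, Finset.mem_insert_self _ _, ?_, ?_⟩
      · intro e he hne
        rcases Finset.mem_insert.1 he with rfl | he'
        · exact absurd rfl hne
        · have heP := Finset.mem_of_mem_erase he'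
          have heα := (Finset.mem_erase.1 he').1
          have heβ : e ≠ β := fun h => hno (h ▸ heP)
          exact (htrans e (hch e heP) heα heβ).1.mp (hcr e heP heα)
      · intro a ha b hb haβ hbβ hab
        have ha' := Finset.mem_erase.1 ((Finset.mem_insert.1 ha).resolve_left haβ)
        have hb' := Finset.mem_erase.1 ((Finset.mem_insert.1 hb).resolve_left hbβ)
        exact hnc a ha'.2 b hb'.2 ha'.1 hb'.1 hab
    · have hcβ : c ≠ β := fun h => hno (h ▸ hc)
      refine ⟨c, Finset.mem_insert_of_mem (Finset.mem_erase.2 ⟨hcα, hc⟩), ?_, ?_⟩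
      · intro e he hne
        rcases Finset.mem_insert.1 he with rfl | he'
        · exact (htrans c (hch c hc) hcα hcβ).2.mp (hcr α hmem (Ne.symm hcα))
        · exact hcr e (Finset.mem_of_mem_erase he') hne
      · intro a ha b hb hac hbc hab
        by_cases haβ : a = β
        · have hbne : ¬ b = β := fun h => hab (by rw [haβ, h])
          have hb' := Finset.mem_erase.1 ((Finset.mem_insert.1 hb).resolve_left hbne)
          have h1 : ¬ Chord.Crosses α b :=
            hnc α hmem b hb'.2 (Ne.symm hcα) hbc (Ne.symm hb'.1)
          rw [haβ]
          exact fun hc' => h1 ((htrans b (hch b hb'.2) hb'.1 hbne).1.mpr hc')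
        · have ha' := Finset.mem_erase.1 ((Finset.mem_insert.1 ha).resolve_left haβ)
          by_cases hbβ : b = β
          · have h1 : ¬ Chord.Crosses a α :=
              hnc a ha'.2 α hmem hac (Ne.symm hcα) ha'.1
            rw [hbβ]
            exact fun hc' => h1 ((htrans a (hch a ha'.2) ha'.1 haβ).2.mpr hc')
          · have hb' := Finset.mem_erase.1 ((Finset.mem_insert.1 hb).resolve_left hbβ)
            exact hnc a ha'.2 b hb'.2 hac hbc hab

/-- No H-triple contains two chords that cross and behave identically towards all
other chords. -/
lemma htriple_not_both {α β : Chord (2 * n)} (hne : α ≠ β)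
    (htrans : ∀ γ ∈ D.chords, γ ≠ α → γ ≠ β →
      ((Chord.Crosses α γ ↔ Chord.Crosses β γ) ∧
        (Chord.Crosses γ α ↔ Chord.Crosses γ β)))
    (hαβ : Chord.Crosses α β)
    {P : Finset (Chord (2 * n))} (hP : D.IsHTriple P) (hA : α ∈ P) (hB : β ∈ P) :
    False := by
  obtain ⟨hcard, hch, c, hc, hcr, hnc⟩ := hP
  have hthird : ∃ γ ∈ P, γ ∉ ({α, β} : Finset (Chord (2 * n))) := by
    rw [← Finset.not_subset]
    intro hsub
    have h1 := Finset.card_le_card hsub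
    have h2 : ({α, β} : Finset (Chord (2 * n))).card ≤ 2 :=
      Finset.card_insert_le _ _ |>.trans (by simp)
    omega
  obtain ⟨γ, hγP, hγ⟩ := hthird
  simp only [Finset.mem_insert, Finset.mem_singleton, not_or] at hγ
  obtain ⟨hγα, hγβ⟩ := hγ
  by_cases hcα : c = α
  · subst hcα
    have h1 : Chord.Crosses c γ := hcr γ hγP hγα
    have h2 : Chord.Crosses β γ := (htrans γ (hch γ hγP) hγα hγβ).1.mp h1
    exact hnc β hB γ hγP (Ne.symm hne) hγα (Ne.symm hγβ) h2
  · by_cases hcβ : c = β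
    · subst hcβ
      have h1 : Chord.Crosses c γ := hcr γ hγP hγβ
      have h2 : Chord.Crosses α γ := (htrans γ (hch γ hγP) hγα hγβ).1.mpr h1
      exact hnc α hA γ hγP hne hγβ (Ne.symm hγα) h2
    · exact hnc α hA β hB (Ne.symm hcα) (Ne.symm hcβ) hne hαβ

end ChordLemmas

/-- Deletion preserves the count of H-triples avoiding the deleted chords. -/
lemma ncard_htriple_del {n n' : ℕ} (D : ChordDiagram n) (D' : ChordDiagram n')
    (S : Set (Chord (2 * n)))
    (φ : {e : Chord (2 * n) // e ∈ D.chords ∧ e ∉ S} ≃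
      {e : Chord (2 * n') // e ∈ D'.chords})
    (hφ : ∀ e f, Chord.Crosses e.1 f.1 ↔ Chord.Crosses (φ e).1 (φ f).1) :
    {P | D'.IsHTriple P}.ncard
      = {P : Finset (Chord (2 * n)) | D.IsHTriple P ∧ ∀ e ∈ P, e ∉ S}.ncard := by
  classical
  set g : Chord (2 * n) → Chord (2 * n') :=
    fun e => if h : e ∈ D.chords ∧ e ∉ S then (φ ⟨e, h⟩).1 else s(0, 0) with hgdef
  have hg : ∀ (e) (h : e ∈ D.chords ∧ e ∉ S), g e = (φ ⟨e, h⟩).1 := by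
    intro e h; simp only [hgdef, dif_pos h]
  have hginj : ∀ e f, (e ∈ D.chords ∧ e ∉ S) → (f ∈ D.chords ∧ f ∉ S) →
      g e = g f → e = f := by
    intro e f he hf h
    rw [hg e he, hg f hf] at h
    have := φ.injective (Subtype.ext h)
    exact congrArg Subtype.val this
  have hgmem : ∀ (e) (h : e ∈ D.chords ∧ e ∉ S), g e ∈ D'.chords := by
    intro e h; rw [hg e h]; exact (φ ⟨e, h⟩).2
  have hgcross : ∀ e f (he : e ∈ D.chords ∧ e ∉ S) (hf : f ∈ D.chords ∧ f ∉ S),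
      (Chord.Crosses e f ↔ Chord.Crosses (g e) (g f)) := by
    intro e f he hf
    rw [hg e he, hg f hf]
    exact hφ ⟨e, he⟩ ⟨f, hf⟩
  have hginv : ∀ (f) (hf : f ∈ D'.chords), g (φ.symm ⟨f, hf⟩).1 = f := by
    intro f hf
    rw [hg _ (φ.symm ⟨f, hf⟩).2]
    exact congrArg Subtype.val (φ.apply_symm_apply ⟨f, hf⟩)
  set T0 : Set (Finset (Chord (2 * n))) :=
    {P | D.IsHTriple P ∧ ∀ e ∈ P, e ∉ S} with hT0
  have himg : (fun P => Finset.image g P) '' T0 = {P | D'.IsHTriple P} := by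
    apply Set.eq_of_subset_of_subset
    · rintro Q ⟨P, ⟨hP, hPS⟩, rfl⟩
      obtain ⟨hcard, hch, c, hc, hcr, hnc⟩ := hP
      have hgood : ∀ e ∈ P, e ∈ D.chords ∧ e ∉ S := fun e he => ⟨hch e he, hPS e he⟩
      have hinjP : Set.InjOn g ↑P := fun x hx y hy h =>
        hginj x y (hgood x hx) (hgood y hy) h
      refine ⟨?_, ?_, g c, Finset.mem_image_of_mem g hc, ?_, ?_⟩
      · rw [Finset.card_image_of_injOn hinjP, hcard]
      · rintro f hf
        obtain ⟨e, he, rfl⟩ := Finset.mem_image.1 hf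
        exact hgmem e (hgood e he)
      · rintro f hf hne
        obtain ⟨e, he, rfl⟩ := Finset.mem_image.1 hf
        have hec : e ≠ c := fun h => hne (by rw [h])
        exact (hgcross c e (hgood c hc) (hgood e he)).mp (hcr e he hec)
      · rintro a' ha' b' hb' h1 h2 h3
        obtain ⟨a, ha, rfl⟩ := Finset.mem_image.1 ha'
        obtain ⟨b, hb, rfl⟩ := Finset.mem_image.1 hb'
        have hac : a ≠ c := fun h => h1 (by rw [h])
        have hbc : b ≠ c := fun h => h2 (by rw [h])
        have hab : a ≠ b := fun h => h3 (by rw [h])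
        exact fun hcr' => hnc a ha b hb hac hbc hab
          ((hgcross a b (hgood a ha) (hgood b hb)).mpr hcr')
    · rintro Q hQ
      obtain ⟨hcard, hch, c, hc, hcr, hnc⟩ := hQ
      set ψ : {f // f ∈ Q} → Chord (2 * n) :=
        fun x => (φ.symm ⟨x.1, hch x.1 x.2⟩).1 with hψ
      have hψmem : ∀ x, ψ x ∈ D.chords ∧ ψ x ∉ S := fun x => (φ.symm _).2
      have hgψ : ∀ x, g (ψ x) = x.1 := fun x => hginv x.1 (hch x.1 x.2)
      have hψinj : ∀ x y, ψ x = ψ y → x = y := by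
        intro x y h
        have h2 : x.1 = y.1 := by rw [← hgψ x, ← hgψ y, h]
        exact Subtype.ext h2
      set P : Finset (Chord (2 * n)) := Q.attach.image ψ with hP
      have hmemP : ∀ e, e ∈ P ↔ ∃ x : {f // f ∈ Q}, ψ x = e := by
        intro e
        simp [hP, Finset.mem_image]
      have hFP : Finset.image g P = Q := by
        ext f
        constructor
        · intro hf
          obtain ⟨e, he, rfl⟩ := Finset.mem_image.1 hf
          obtain ⟨x, rfl⟩ := (hmemP e).1 he
          rw [hgψ x]; exact x.2
        · intro hf
          refine Finset.mem_image.2 ⟨ψ ⟨f, hf⟩, (hmemP _).2 ⟨⟨f, hf⟩, rfl⟩, hgψ ⟨f, hf⟩⟩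
      refine ⟨P, ⟨⟨?_, ?_, ψ ⟨c, hc⟩, (hmemP _).2 ⟨⟨c, hc⟩, rfl⟩, ?_, ?_⟩, ?_⟩, hFP⟩
      · rw [hP, Finset.card_image_of_injOn (fun x _ y _ h => hψinj x y h),
          Finset.card_attach, hcard]
      · intro e he
        obtain ⟨x, rfl⟩ := (hmemP e).1 he
        exact (hψmem x).1
      · intro e he hne
        obtain ⟨x, rfl⟩ := (hmemP e).1 he
        have hxc : x.1 ≠ c := fun h => hne (by
          have : x = ⟨c, hc⟩ := Subtype.ext h
          rw [this])
        have h := hφ (φ.symm ⟨c, hch c hc⟩) (φ.symm ⟨x.1, hch x.1 x.2⟩)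
        rw [φ.apply_symm_apply, φ.apply_symm_apply] at h
        exact h.mpr (hcr x.1 x.2 hxc)
      · intro a ha b hb h1 h2 h3
        obtain ⟨x, rfl⟩ := (hmemP a).1 ha
        obtain ⟨y, rfl⟩ := (hmemP b).1 hb
        have hxc : x.1 ≠ c := fun h => h1 (by
          have : x = ⟨c, hc⟩ := Subtype.ext h
          rw [this])
        have hyc : y.1 ≠ c := fun h => h2 (by
          have : y = ⟨c, hc⟩ := Subtype.ext h
          rw [this])
        have hxy : x.1 ≠ y.1 := fun h => h3 (by rw [show x = y from Subtype.ext h])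
        have h := hφ (φ.symm ⟨x.1, hch x.1 x.2⟩) (φ.symm ⟨y.1, hch y.1 y.2⟩)
        rw [φ.apply_symm_apply, φ.apply_symm_apply] at h
        exact fun hcr' => hnc x.1 x.2 y.1 y.2 hxc hyc hxy (h.mp hcr')
      · intro e he
        obtain ⟨x, rfl⟩ := (hmemP e).1 he
        exact (hψmem x).2
  have hinj : Set.InjOn (fun P => Finset.image g P) T0 := by
    rintro P ⟨hP, hPS⟩ Q ⟨hQ, hQS⟩ h
    have hgoodP : ∀ e ∈ P, e ∈ D.chords ∧ e ∉ S := fun e he => ⟨hP.2.1 e he, hPS e he⟩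
    have hgoodQ : ∀ e ∈ Q, e ∈ D.chords ∧ e ∉ S := fun e he => ⟨hQ.2.1 e he, hQS e he⟩
    ext e
    constructor
    · intro he
      have himg : Finset.image g P = Finset.image g Q := h
      have hmem : g e ∈ Finset.image g Q := by
        rw [← himg]; exact Finset.mem_image_of_mem g he
      obtain ⟨e', he', heq⟩ := Finset.mem_image.1 hmem
      rwa [← hginj e' e (hgoodQ e' he') (hgoodP e he) heq]
    · intro he
      have himg : Finset.image g P = Finset.image g Q := h
      have hmem : g e ∈ Finset.image g P := by
        rw [himg]; exact Finset.mem_image_of_mem g he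
      obtain ⟨e', he', heq⟩ := Finset.mem_image.1 hmem
      rwa [← hginj e' e (hgoodP e' he') (hgoodQ e he) heq]
  rw [← himg, Set.ncard_image_of_injOn hinj]


/-- for a weak RII pair `α = {i, j}`, `β = {i+1, j+1}`, no H-triple of `D`
contains both `α` and `β`, and deleting `α` and `β` changes the H-chord count by an
even number. -/
theorem weak_RII_changes_H_by_even (n : ℕ) (D : ChordDiagram (n + 2)) (D' : ChordDiagram n)
    (i j : ZMod (2 * (n + 2)))
    (hord : CyclicOrd4 i (i + 1) j (j + 1))
    (hα : s(i, j) ∈ D.chords) (hβ : s(i + 1, j + 1) ∈ D.chords)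
    (hdel : D.DeletionOf {s(i, j), s(i + 1, j + 1)} D') :
    (∀ P : Finset (Chord (2 * (n + 2))), D.IsHTriple P →
        ¬ (s(i, j) ∈ P ∧ s(i + 1, j + 1) ∈ P)) ∧
      D.H ≡ D'.H [MOD 2] := by
  haveI : NeZero (2 * (n + 2)) := ⟨by omega⟩
  obtain ⟨h01, h12, h23⟩ := hord
  have hmge : 2 ≤ 2 * (n + 2) := by omega
  have hv1' : (1 : ZMod (2 * (n + 2))).val = 1 := by
    rw [ZMod.val_one_eq_one_mod]; exact Nat.mod_eq_of_lt (by omega)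
  have hv1 : ((i + 1) - i).val = 1 := by
    rw [show (i + 1) - i = 1 by ring, hv1']
  have hK : 1 < (j - i).val := by rwa [hv1] at h12
  have hKm : (j - i).val < 2 * (n + 2) := ZMod.val_lt _
  have hK2 : ((j + 1) - i).val = (j - i).val + 1 := by
    have e : ((j + 1) - i).val = ((j - i) + 1).val := by ring_nf
    have e2 : ((j - i) + 1).val = ((j - i).val + 1) % (2 * (n + 2)) := by
      rw [ZMod.val_add, hv1']
    rw [e, e2]
    by_cases hcase : (j - i).val + 1 = 2 * (n + 2)
    · exfalso
      rw [e, e2, hcase, Nat.mod_self] at h23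
      omega
    · exact Nat.mod_eq_of_lt (by omega)
  have hK2m : (j - i).val + 1 < 2 * (n + 2) := by rw [← hK2]; exact ZMod.val_lt _
  -- distinctness of the four points
  have hi1i : i + 1 ≠ i := by
    intro h; rw [h, sub_self] at hv1; simp at hv1
  have hji : j ≠ i := by
    intro h; rw [h, sub_self] at hK; simp at hK
  have hji1 : j ≠ i + 1 := by
    intro h; rw [h, hv1] at hK; omega
  have hj1i : j + 1 ≠ i := by
    intro h; rw [h, sub_self] at hK2; simp at hK2
  have hj1i1 : j + 1 ≠ i + 1 := fun h => hji (add_right_cancel h)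
  have hj1j : j + 1 ≠ j := by
    intro h
    have e : ((j + 1) - j).val = 1 := by rw [show (j + 1) - j = 1 by ring, hv1']
    rw [h, sub_self] at e; simp at e
  have hij : i ≠ j := Ne.symm hji
  -- α ≠ β
  have hαβne : s(i, j) ≠ s(i + 1, j + 1) := by
    intro h
    rcases Sym2.eq_iff.1 h with ⟨h1, h2⟩ | ⟨h1, h2⟩
    · exact hi1i h1.symm
    · exact hji1 h2
  -- α crosses β, β crosses α
  have hcrossαβ : Chord.Crosses s(i, j) s(i + 1, j + 1) := by
    refine ⟨i, j, i + 1, j + 1, rfl, rfl, Or.inl ⟨⟨?_, ?_⟩, ?_⟩⟩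
    · rw [hv1]; omega
    · rw [hv1]; exact hK
    · intro h
      obtain ⟨h1', h2'⟩ := h
      rw [hK2] at h2'
      omega
  have hcrossβα : Chord.Crosses s(i + 1, j + 1) s(i, j) := by
    have hb : ((j + 1) - (i + 1)).val = (j - i).val := by norm_num
    have hjv : (j - (i + 1)).val = (j - i).val - 1 := by
      have e : (j - (i + 1)).val = ((j - i) - ((i + 1) - i)).val := by ring_nf
      rw [e, val_sub', hv1, if_pos (by omega)]
    have hiv : (i - (i + 1)).val = 2 * (n + 2) - 1 := by
      rw [show i - (i + 1) = -((i + 1) - i) by ring, ZMod.neg_val,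
        if_neg (sub_ne_zero.mpr hi1i), hv1]
    refine ⟨i + 1, j + 1, i, j, rfl, rfl, Or.inr ⟨⟨?_, ?_⟩, ?_⟩⟩
    · rw [hjv]; omega
    · rw [hjv, hb]; omega
    · intro h
      obtain ⟨h1', h2'⟩ := h
      rw [hiv, hb] at h2'
      omega
  -- transfer: any other chord relates to α exactly as to β
  have htrans : ∀ γ ∈ D.chords, γ ≠ s(i, j) → γ ≠ s(i + 1, j + 1) →
      ((Chord.Crosses s(i, j) γ ↔ Chord.Crosses s(i + 1, j + 1) γ) ∧
        (Chord.Crosses γ s(i, j) ↔ Chord.Crosses γ s(i + 1, j + 1))) := by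
    intro γ hγ hγα hγβ
    obtain ⟨x, rfl⟩ := hγ
    have hd : s(x, D.inv x) ∈ D.chords := ⟨x, rfl⟩
    obtain ⟨hxi, hxj, hdi, hdj⟩ := chords_endpoint_ne hd hα hγα
    obtain ⟨hxi1, hxj1, hdi1, hdj1⟩ := chords_endpoint_ne hd hβ hγβ
    have hcd : x ≠ D.inv x := chord_ne hd
    have e1 : InArc i j x ↔ InArc (i + 1) (j + 1) x :=
      inArc_shift hv1 hK hK2 hxi hxi1 hxj
    have e2 : InArc i j (D.inv x) ↔ InArc (i + 1) (j + 1) (D.inv x) :=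
      inArc_shift hv1 hK hK2 hdi hdi1 hdj
    have f1 : InArc x (D.inv x) i ↔ InArc x (D.inv x) (i + 1) :=
      inArc_pt_shift (Ne.symm hxi) (Ne.symm hdi) (Ne.symm hxi1) (Ne.symm hdi1)
    have f2 : InArc x (D.inv x) j ↔ InArc x (D.inv x) (j + 1) :=
      inArc_pt_shift (Ne.symm hxj) (Ne.symm hdj) (Ne.symm hxj1) (Ne.symm hdj1)
    constructor
    · rw [crosses_norm hij hxi hxj hdi hdj,
        crosses_norm (Ne.symm hj1i1) hxi1 hxj1 hdi1 hdj1, e1, e2]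
    · rw [crosses_norm hcd (Ne.symm hxi) (Ne.symm hdi) (Ne.symm hxj) (Ne.symm hdj),
        crosses_norm hcd (Ne.symm hxi1) (Ne.symm hdi1) (Ne.symm hxj1) (Ne.symm hdj1),
        f1, f2]
  have part1 : ∀ P : Finset (Chord (2 * (n + 2))), D.IsHTriple P →
      ¬(s(i, j) ∈ P ∧ s(i + 1, j + 1) ∈ P) :=
    fun P hP h => htriple_not_both hαβne htrans hcrossαβ hP h.1 h.2
  refine ⟨part1, ?_⟩
  obtain ⟨φ, hφ⟩ := hdel
  have hdelcount := ncard_htriple_del D D' _ φ hφ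
  set S0 : Set (Finset (Chord (2 * (n + 2)))) :=
    {P | D.IsHTriple P ∧ s(i, j) ∉ P ∧ s(i + 1, j + 1) ∉ P} with hS0
  set A : Set (Finset (Chord (2 * (n + 2)))) :=
    {P | D.IsHTriple P ∧ s(i, j) ∈ P} with hAdef
  set B : Set (Finset (Chord (2 * (n + 2)))) :=
    {P | D.IsHTriple P ∧ s(i + 1, j + 1) ∈ P} with hBdef
  have hsplit : {P | D.IsHTriple P} = S0 ∪ (A ∪ B) := by
    ext P
    simp only [hS0, hAdef, hBdef, Set.mem_setOf_eq, Set.mem_union]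
    tauto
  have hABdisj : Disjoint A B := by
    rw [Set.disjoint_left]
    rintro P ⟨h1, h2⟩ ⟨h3, h4⟩
    exact part1 P h1 ⟨h2, h4⟩
  have hS0disj : Disjoint S0 (A ∪ B) := by
    rw [Set.disjoint_left]
    rintro P ⟨h1, h2, h3⟩ (⟨h4, h5⟩ | ⟨h4, h5⟩) <;> tauto
  have hcount : D.H = S0.ncard + (A.ncard + B.ncard) := by
    rw [ChordDiagram.H, hsplit,
      Set.ncard_union_eq hS0disj (Set.toFinite _) (Set.toFinite _),
      Set.ncard_union_eq hABdisj (Set.toFinite _) (Set.toFinite _)]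
  have htrans' : ∀ γ ∈ D.chords, γ ≠ s(i + 1, j + 1) → γ ≠ s(i, j) →
      ((Chord.Crosses s(i + 1, j + 1) γ ↔ Chord.Crosses s(i, j) γ) ∧
        (Chord.Crosses γ s(i + 1, j + 1) ↔ Chord.Crosses γ s(i, j))) :=
    fun γ h1 h2 h3 => ⟨(htrans γ h1 h3 h2).1.symm, (htrans γ h1 h3 h2).2.symm⟩
  have hABcard : A.ncard = B.ncard := by
    have himg : (fun P => insert s(i + 1, j + 1) (Finset.erase P s(i, j))) '' A = B := by
      apply Set.eq_of_subset_of_subset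
      · rintro Q ⟨P, ⟨hP, hPα⟩, rfl⟩
        have hPβ : s(i + 1, j + 1) ∉ P := fun h => part1 P hP ⟨hPα, h⟩
        exact ⟨htriple_swap hβ htrans hP hPα hPβ, Finset.mem_insert_self _ _⟩
      · rintro Q ⟨hQ, hQβ⟩
        have hQα : s(i, j) ∉ Q := fun h => part1 Q hQ ⟨h, hQβ⟩
        have hαQ' : s(i, j) ∉ Q.erase s(i + 1, j + 1) :=
          fun h => hQα (Finset.mem_of_mem_erase h)
        refine ⟨insert s(i, j) (Q.erase s(i + 1, j + 1)),
          ⟨htriple_swap hα htrans' hQ hQβ hQα, Finset.mem_insert_self _ _⟩, ?_⟩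
        simp only
        rw [Finset.erase_insert hαQ', Finset.insert_erase hQβ]
      -- done
    have hinj : Set.InjOn (fun P => insert s(i + 1, j + 1) (Finset.erase P s(i, j))) A := by
      rintro P1 ⟨hP1, hα1⟩ P2 ⟨hP2, hα2⟩ h
      simp only at h
      have hβ1 : s(i + 1, j + 1) ∉ P1.erase s(i, j) :=
        fun hh => part1 P1 hP1 ⟨hα1, Finset.mem_of_mem_erase hh⟩
      have hβ2 : s(i + 1, j + 1) ∉ P2.erase s(i, j) :=
        fun hh => part1 P2 hP2 ⟨hα2, Finset.mem_of_mem_erase hh⟩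
      have he : P1.erase s(i, j) = P2.erase s(i, j) := by
        have := congrArg (fun Q => Finset.erase Q s(i + 1, j + 1)) h
        simpa [Finset.erase_insert hβ1, Finset.erase_insert hβ2] using this
      rw [← Finset.insert_erase hα1, he, Finset.insert_erase hα2]
    rw [← himg, Set.ncard_image_of_injOn hinj]
  have hS0' : {P : Finset (Chord (2 * (n + 2))) | D.IsHTriple P ∧
      ∀ e ∈ P, e ∉ ({s(i, j), s(i + 1, j + 1)} : Set (Chord (2 * (n + 2))))} = S0 := by
    ext P
    simp only [hS0, Set.mem_setOf_eq, Set.mem_insert_iff, Set.mem_singleton_iff]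
    constructor
    · rintro ⟨h1, h2⟩
      exact ⟨h1, fun h => (h2 _ h) (Or.inl rfl), fun h => (h2 _ h) (Or.inr rfl)⟩
    · rintro ⟨h1, h2, h3⟩
      refine ⟨h1, fun e he hmem => ?_⟩
      rcases hmem with rfl | rfl
      · exact h2 he
      · exact h3 he
  have hH' : D'.H = S0.ncard := by
    rw [ChordDiagram.H, hdelcount, hS0']
  rw [Nat.ModEq]
  omega
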